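/- Let n ≥ 1 and let p_1 ≤ p_2 ≤ … ≤ p_n be a nondecreasing probability distribution on symbols {1,…,n}. Then there exists a prefix code w* that attains the minimum of Σ_i p_i·|w(i)| over ALL prefix codes w on {1,…,n}, and such that every codeword of w* contains at most log₂ n ones (i.e., ones(w*(i)) ≤ log₂ n for every i). -/

import Mathlib

open scoped BigOperators



private def NPF (a b : List Bool) : Prop := ¬ a <+: b ∧ ¬ b <+: a

private lemma npf_nil_left (a : List Bool) : ¬ NPF [] a := fun h => h.1 List.nil_prefix
private lemma npf_nil_right (a : List Bool) : ¬ NPF a [] := fun h => h.2 List.nil_prefix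

private lemma pairwise_nil_mem {S : List (List Bool)} (hp : S.Pairwise NPF)
    (hmem : [] ∈ S) : S = [[]] := by
  induction S with
  | nil => simp at hmem
  | cons a T ih =>
    rcases List.pairwise_cons.1 hp with ⟨ha, hT⟩
    rcases List.mem_cons.1 hmem with h | h
    · subst h
      cases T with
      | nil => simp
      | cons b U => exact absurd (ha b (by simp)) (npf_nil_left b)
    · exact absurd (ha [] h) (npf_nil_right a)

private lemma sum_split_head (f : List Bool → ℕ) :
    ∀ (S : List (List Bool)), (∀ c ∈ S, c ≠ []) →
    (S.map f).sum =
      ((S.filter (fun c => c.head? == some true)).map f).sum +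
      ((S.filter (fun c => c.head? == some false)).map f).sum := by
  intro S
  induction S with
  | nil => simp
  | cons a T ih =>
    intro hne
    have ha : a ≠ [] := hne a (by simp)
    obtain ⟨b, t, rfl⟩ := List.exists_cons_of_ne_nil ha
    have hT := ih (fun c hc => hne c (by simp [hc]))
    cases b <;> simp [List.filter_cons, hT] <;> omega

/-- Kraft inequality (direct part), list form. -/
private lemma kraft_list : ∀ (M : ℕ) (S : List (List Bool)), S.Pairwise NPF →
    (∀ c ∈ S, c.length ≤ M) → (S.map fun c => 2 ^ (M - c.length)).sum ≤ 2 ^ M := by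
  intro M
  induction M with
  | zero =>
    intro S hp hlen
    match S with
    | [] => simp
    | [x] => simp
    | x :: y :: T =>
      exfalso
      have hx : x = [] := List.eq_nil_of_length_eq_zero (Nat.le_zero.1 (hlen x (by simp)))
      have := pairwise_nil_mem hp (by rw [← hx]; simp)
      simp at this
  | succ M ih =>
    intro S hp hlen
    by_cases hemp : [] ∈ S
    · rw [pairwise_nil_mem hp hemp]
      simp
    · have hne : ∀ c ∈ S, c ≠ [] := fun c hc h => hemp (h ▸ hc)
      rw [sum_split_head _ S hne]
      have key : ∀ b : Bool,
          (((S.filter (fun c => c.head? == some b)).map List.tail).map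
            (fun c => 2 ^ (M - c.length))).sum ≤ 2 ^ M := by
        intro b
        set T := S.filter (fun c => c.head? == some b) with hTdef
        have hmemT : ∀ c ∈ T, c = b :: c.tail := by
          intro c hc
          have h1 := List.of_mem_filter hc
          have h2 : c ≠ [] := hne c (List.mem_of_mem_filter hc)
          obtain ⟨x, t, rfl⟩ := List.exists_cons_of_ne_nil h2
          simp at h1
          simp [h1]
        apply ih
        · rw [List.pairwise_map]
          refine (hp.sublist List.filter_sublist).imp_of_mem ?_
          intro a c haT hcT hR
          constructor
          · intro hpre
            exact hR.1 (by rw [hmemT a haT, hmemT c hcT]; exact (List.cons_prefix_cons).2 ⟨rfl, hpre⟩)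
          · intro hpre
            exact hR.2 (by rw [hmemT c hcT, hmemT a haT]; exact (List.cons_prefix_cons).2 ⟨rfl, hpre⟩)
        · intro c hc
          rcases List.mem_map.1 hc with ⟨d, hdT, rfl⟩
          have := hlen d (List.mem_of_mem_filter hdT)
          have hd : d ≠ [] := hne d (List.mem_of_mem_filter hdT)
          have : d.tail.length = d.length - 1 := by simp
          omega
      have conv : ∀ b : Bool,
          ((S.filter (fun c => c.head? == some b)).map (fun c => 2 ^ (M + 1 - c.length))).sum =
          (((S.filter (fun c => c.head? == some b)).map List.tail).map
            (fun c => 2 ^ (M - c.length))).sum := by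
        intro b
        rw [List.map_map]
        apply congrArg
        apply List.map_congr_left
        intro c hc
        have hcn : c ≠ [] := hne c (List.mem_of_mem_filter hc)
        have h1 : 1 ≤ c.length := List.length_pos_iff.2 hcn
        simp only [Function.comp]
        have : c.tail.length = c.length - 1 := by simp
        rw [this]
        congr 1
        omega
      calc ((S.filter (fun c => c.head? == some true)).map fun c => 2 ^ (M + 1 - c.length)).sum +
            ((S.filter (fun c => c.head? == some false)).map fun c => 2 ^ (M + 1 - c.length)).sum
          ≤ 2 ^ M + 2 ^ M := by
            rw [conv true, conv false]; exact Nat.add_le_add (key true) (key false)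
        _ = 2 ^ (M + 1) := by ring


private noncomputable def kraftF {n : ℕ} (ℓ : Fin n → ℕ) : ℝ := ∑ i, ((2:ℝ) ^ ℓ i)⁻¹

private lemma kraft_scaled {n : ℕ} (ℓ : Fin n → ℕ) (M : ℕ) (h : ∀ i, ℓ i ≤ M) :
    ((∑ i, 2 ^ (M - ℓ i) : ℕ) : ℝ) = 2 ^ M * kraftF ℓ := by
  rw [kraftF, Finset.mul_sum]
  push_cast
  apply Finset.sum_congr rfl
  intro i _
  have hi := h i
  have : (2:ℝ) ^ M = 2 ^ ℓ i * 2 ^ (M - ℓ i) := by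
    rw [← pow_add]
    congr 1
    omega
  rw [this]
  field_simp

private lemma list_len_split (p : ℕ → Bool) : ∀ (l : List ℕ),
    l.length = (l.filter p).length + (l.filter (fun x => !(p x))).length := by
  intro l
  induction l with
  | nil => simp
  | cons a t ih =>
    cases h : p a <;> simp [List.filter_cons, h, ih] <;> omega

/-- helper: splitting a nat list sum by a predicate -/
private lemma list_sum_split (p : ℕ → Bool) : ∀ (l : List ℕ),
    l.sum = (l.filter p).sum + (l.filter (fun x => !(p x))).sum := by
  intro l
  induction l with
  | nil => simp
  | cons a t ih =>
    cases h : p a <;> simp [List.filter_cons, h, ih] <;> omega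

private lemma two_mul_half_sum : ∀ (l : List ℕ), (∀ x ∈ l, 2 ∣ x) →
    2 * (l.map (· / 2)).sum = l.sum := by
  intro l
  induction l with
  | nil => simp
  | cons a t ih =>
    intro h
    have ha := h a (by simp)
    have := ih (fun x hx => h x (by simp [hx]))
    simp only [List.map_cons, List.sum_cons]
    omega

/-- a list of powers of two containing `1` and summing to `2^M` has length at least `M+1`. -/
private lemma pow_sum_length : ∀ (M : ℕ) (L : List ℕ), (∀ x ∈ L, ∃ e, x = 2 ^ e) →
    (1:ℕ) ∈ L → L.sum = 2 ^ M → M + 1 ≤ L.length := by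
  intro M
  induction M with
  | zero =>
    intro L _ hmem _
    have := List.length_pos_iff.2 (List.ne_nil_of_mem hmem)
    omega
  | succ M ih =>
    intro L hpow hmem hsum
    classical
    set k := L.count 1 with hk
    have hk1 : 1 ≤ k := List.count_pos_iff.2 hmem
    have hsplit := list_sum_split (fun x => x == 1) L
    have hfeq : (L.filter (fun x => x == 1)).sum = k := by
      have hall : ∀ x ∈ L.filter (fun x => x == 1), x = 1 := by
        intro x hx
        simpa using List.of_mem_filter hx
      have hlen : (L.filter (fun x => x == 1)).length = k := by
        simp [hk, List.count, List.countP_eq_length_filter]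
      calc (L.filter (fun x => x == 1)).sum
          = ((L.filter (fun x => x == 1)).map (fun _ => 1)).sum := by
            rw [List.map_congr_left (fun x hx => (hall x hx).symm)]; simp
        _ = k := by simp [hlen]
    have hdvd2 : 2 ∣ (L.filter (fun x => !(x == 1))).sum := by
      apply List.dvd_sum
      intro x hx
      obtain ⟨e, rfl⟩ := hpow x (List.mem_of_mem_filter hx)
      have : (2:ℕ) ^ e ≠ 1 := by simpa using List.of_mem_filter hx
      have he : e ≠ 0 := by rintro rfl; simp at this
      exact dvd_pow_self 2 he
    have hkeven : 2 ∣ k := by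
      have h2 : 2 ∣ L.sum := by rw [hsum]; exact dvd_pow_self 2 (by omega)
      omega
    -- build L'
    set R := L.filter (fun x => !(x == 1)) with hR
    set L' := List.replicate (k / 2) 2 ++ R with hL'
    have hsum' : L'.sum = 2 ^ (M + 1) := by
      rw [hL', List.sum_append, List.sum_replicate, smul_eq_mul]
      rw [hsplit, hfeq] at hsum
      omega
    have hlenR : R.length = L.length - k := by
      have hsp := list_len_split (fun x => x == 1) L
      have hlen : (L.filter (fun x => x == 1)).length = k := by
        simp [hk, List.count, List.countP_eq_length_filter]
      rw [hR]
      omega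
    have hklen : k ≤ L.length := List.count_le_length
    have hlen' : L'.length = k / 2 + (L.length - k) := by
      rw [hL', List.length_append, List.length_replicate, hlenR]
    have heven' : ∀ x ∈ L', 2 ∣ x := by
      intro x hx
      rw [hL', List.mem_append] at hx
      rcases hx with hx | hx
      · have := List.eq_of_mem_replicate hx; omega
      · obtain ⟨e, rfl⟩ := hpow x (List.mem_of_mem_filter hx)
        have : (2:ℕ) ^ e ≠ 1 := by simpa using List.of_mem_filter hx
        have he : e ≠ 0 := by rintro rfl; simp at this
        exact dvd_pow_self 2 he
    set L'' := L'.map (· / 2) with hL''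
    have hpow'' : ∀ x ∈ L'', ∃ e, x = 2 ^ e := by
      intro x hx
      rw [hL''] at hx
      rcases List.mem_map.1 hx with ⟨y, hy, rfl⟩
      obtain ⟨e, rfl⟩ : ∃ e, y = 2 ^ e := by
        rw [hL', List.mem_append] at hy
        rcases hy with hy | hy
        · exact ⟨1, by have := List.eq_of_mem_replicate hy; omega⟩
        · exact hpow y (List.mem_of_mem_filter hy)
      have he : e ≠ 0 := by
        rintro rfl
        have := heven' _ hy
        omega
      refine ⟨e - 1, ?_⟩
      have : (2:ℕ) ^ e = 2 * 2 ^ (e - 1) := by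
        rw [← pow_succ']
        congr 1
        omega
      omega
    have hmem'' : (1:ℕ) ∈ L'' := by
      rw [hL'']
      have h2 : (2:ℕ) ∈ L' := by
        rw [hL', List.mem_append]
        left
        exact List.mem_replicate.2 ⟨by omega, rfl⟩
      exact List.mem_map.2 ⟨2, h2, rfl⟩
    have hsum'' : L''.sum = 2 ^ M := by
      have := two_mul_half_sum L' heven'
      rw [hL''] at *
      rw [hsum'] at this
      have h2 : (2:ℕ) ^ (M+1) = 2 * 2 ^ M := by ring
      omega
    have := ih L'' hpow'' hmem'' hsum''
    have hlen'' : L''.length = L'.length := by rw [hL'']; simp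
    omega


private lemma kraft_le_one_of_scaled {n : ℕ} (ℓ : Fin n → ℕ) (M : ℕ) (h : ∀ i, ℓ i ≤ M)
    (hle : (∑ i, 2 ^ (M - ℓ i) : ℕ) ≤ 2 ^ M) : kraftF ℓ ≤ 1 := by
  have hs := kraft_scaled ℓ M h
  have h2 : (0:ℝ) < 2 ^ M := by positivity
  have : (2:ℝ) ^ M * kraftF ℓ ≤ 2 ^ M * 1 := by
    rw [← hs, mul_one]
    exact_mod_cast hle
  exact le_of_mul_le_mul_left this h2

/-- if the Kraft sum is exactly 1 then every length is at most `n-1`. -/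
private lemma length_le_of_kraft_eq_one {n : ℕ} (hn : 1 ≤ n) (ℓ : Fin n → ℕ)
    (h : kraftF ℓ = 1) : ∀ i, ℓ i ≤ n - 1 := by
  classical
  set M := Finset.univ.sup ℓ with hM
  have hle : ∀ i, ℓ i ≤ M := fun i => Finset.le_sup (Finset.mem_univ i)
  obtain ⟨i₀, -, hi₀⟩ := Finset.exists_mem_eq_sup Finset.univ
    (Finset.univ_nonempty_iff.2 ⟨⟨0, hn⟩⟩) ℓ
  have hsc := kraft_scaled ℓ M hle
  rw [h, mul_one] at hsc
  have hnat : (∑ i, 2 ^ (M - ℓ i) : ℕ) = 2 ^ M := by exact_mod_cast hsc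
  set L := List.ofFn (fun i => 2 ^ (M - ℓ i)) with hL
  have hsum : L.sum = 2 ^ M := by rw [hL, List.sum_ofFn]; exact hnat
  have hpow : ∀ x ∈ L, ∃ e, x = 2 ^ e := by
    intro x hx
    rw [hL, List.mem_ofFn] at hx
    obtain ⟨i, rfl⟩ := hx
    exact ⟨_, rfl⟩
  have hmem : (1:ℕ) ∈ L := by
    rw [hL, List.mem_ofFn]
    refine ⟨i₀, ?_⟩
    show 2 ^ (M - ℓ i₀) = 1
    have : ℓ i₀ = M := by rw [hM, hi₀]
    rw [this]
    simp
  have := pow_sum_length M L hpow hmem hsum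
  have hlen : L.length = n := by rw [hL]; simp
  intro i
  have := hle i
  omega

/-- Kraft completion: decrease lengths until the Kraft sum is exactly 1,
    preserving antitonicity. -/
private lemma kraft_completion {n : ℕ} (hn : 1 ≤ n) :
    ∀ (s : ℕ) (ℓ : Fin n → ℕ), (∑ i, ℓ i) ≤ s → Antitone ℓ → kraftF ℓ ≤ 1 →
    ∃ ℓ' : Fin n → ℕ, (∀ i, ℓ' i ≤ ℓ i) ∧ Antitone ℓ' ∧ kraftF ℓ' = 1 := by
  classical
  intro s
  induction s with
  | zero =>
    intro ℓ hs hanti hk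
    refine ⟨ℓ, fun i => le_rfl, hanti, ?_⟩
    have hz : ∀ i, ℓ i = 0 := by
      intro i
      have := Finset.single_le_sum (f := ℓ) (fun j _ => Nat.zero_le _) (Finset.mem_univ i)
      omega
    have : kraftF ℓ = n := by
      rw [kraftF]
      rw [Finset.sum_congr rfl (fun i _ => by rw [hz i, pow_zero, inv_one])]
      simp
    rw [this] at hk ⊢
    have : (1:ℝ) ≤ (n:ℝ) := by exact_mod_cast hn
    linarith
  | succ s ih =>
    intro ℓ hs hanti hk
    rcases eq_or_lt_of_le hk with heq | hlt
    · exact ⟨ℓ, fun i => le_rfl, hanti, heq⟩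
    set z : Fin n := ⟨0, hn⟩ with hz
    have hmax : ∀ i, ℓ i ≤ ℓ z := fun i => hanti (by simp [hz, Fin.le_def])
    by_cases h0 : ℓ z = 0
    · exfalso
      have hz' : ∀ i, ℓ i = 0 := fun i => by have := hmax i; omega
      have : kraftF ℓ = n := by
        rw [kraftF, Finset.sum_congr rfl (fun i _ => by rw [hz' i, pow_zero, inv_one])]
        simp
      rw [this] at hlt
      have : (1:ℝ) ≤ (n:ℝ) := by exact_mod_cast hn
      linarith
    -- ℓ z ≥ 1 : decrement the last index attaining the max
    set T := Finset.univ.filter (fun i => ℓ i = ℓ z) with hT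
    have hTne : T.Nonempty := ⟨z, by simp [hT]⟩
    set i₀ := T.max' hTne with hi₀
    have hi₀mem : i₀ ∈ T := T.max'_mem hTne
    have hi₀val : ℓ i₀ = ℓ z := by
      have := hi₀mem
      rw [hT] at this
      simpa using this
    set ℓ' := Function.update ℓ i₀ (ℓ z - 1) with hℓ'
    -- kraft of update
    have hksplit : kraftF ℓ = ((2:ℝ) ^ ℓ z)⁻¹ + ∑ i ∈ Finset.univ.erase i₀, ((2:ℝ) ^ ℓ i)⁻¹ := by
      rw [kraftF, ← Finset.add_sum_erase _ _ (Finset.mem_univ i₀), hi₀val]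
    have hksplit' : kraftF ℓ' = ((2:ℝ) ^ (ℓ z - 1))⁻¹ + ∑ i ∈ Finset.univ.erase i₀, ((2:ℝ) ^ ℓ i)⁻¹ := by
      rw [kraftF, ← Finset.add_sum_erase _ _ (Finset.mem_univ i₀), hℓ']
      congr 1
      · rw [Function.update_self]
      · apply Finset.sum_congr rfl
        intro i hi
        rw [Function.update_of_ne (Finset.ne_of_mem_erase hi)]
    have hpowsplit : ((2:ℝ) ^ (ℓ z - 1))⁻¹ = 2 * ((2:ℝ) ^ ℓ z)⁻¹ := by
      have : (2:ℝ) ^ ℓ z = 2 * 2 ^ (ℓ z - 1) := by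
        rw [← pow_succ']
        congr 1
        omega
      rw [this]
      rw [mul_inv]
      field_simp
    have hknew : kraftF ℓ' = kraftF ℓ + ((2:ℝ) ^ ℓ z)⁻¹ := by
      rw [hksplit', hksplit, hpowsplit]; ring
    -- bound : kraftF ℓ ≤ 1 - 2⁻^{ℓ z}
    have hbound : kraftF ℓ ≤ 1 - ((2:ℝ) ^ ℓ z)⁻¹ := by
      have hsc := kraft_scaled ℓ (ℓ z) hmax
      set N := (∑ i, 2 ^ (ℓ z - ℓ i) : ℕ) with hN
      have hNlt : (N:ℝ) < 2 ^ ℓ z := by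
        rw [hsc]
        have h2 : (0:ℝ) < 2 ^ ℓ z := by positivity
        nlinarith
      have hNle : N ≤ 2 ^ ℓ z - 1 := by
        have : N < 2 ^ ℓ z := by exact_mod_cast hNlt
        omega
      have h2 : (0:ℝ) < 2 ^ ℓ z := by positivity
      have hkval : kraftF ℓ = (N:ℝ) / 2 ^ ℓ z := by
        rw [hsc]; field_simp
      rw [hkval]
      rw [div_le_iff₀ h2]
      have : ((N:ℝ)) ≤ (2:ℝ) ^ ℓ z - 1 := by
        have h1 : ((2:ℕ) ^ ℓ z - 1 : ℕ) = ((2:ℝ) ^ ℓ z - 1 : ℝ) := by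
          push_cast [Nat.cast_sub (Nat.one_le_two_pow)]
          ring
        calc ((N:ℝ)) ≤ (((2:ℕ) ^ ℓ z - 1 : ℕ) : ℝ) := by exact_mod_cast hNle
          _ = (2:ℝ) ^ ℓ z - 1 := h1
      have hinv : (2:ℝ) ^ ℓ z * ((2:ℝ) ^ ℓ z)⁻¹ = 1 := by field_simp
      nlinarith
    have hknew_le : kraftF ℓ' ≤ 1 := by rw [hknew]; linarith
    -- antitone
    have hanti' : Antitone ℓ' := by
      intro i j hij
      rw [hℓ']
      rcases eq_or_ne i i₀ with rfl | hi <;> rcases eq_or_ne j i₀ with hj | hj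
      · rw [hj]
      · rw [Function.update_self, Function.update_of_ne hj]
        have hji : ℓ j ≤ ℓ z := hmax j
        have : ℓ j ≠ ℓ z := by
          intro hjz
          have : j ∈ T := by simp [hT, hjz]
          have := Finset.le_max' T j this
          rw [← hi₀] at this
          exact hj (le_antisymm this hij)
        omega
      · subst hj
        rw [Function.update_self, Function.update_of_ne hi]
        have : ℓ i₀ ≤ ℓ i := hanti hij
        omega
      · rw [Function.update_of_ne hi, Function.update_of_ne hj]
        exact hanti hij
    -- sum decreases
    have hsum' : (∑ i, ℓ' i) ≤ s := by
      have : (∑ i, ℓ' i) + 1 = ∑ i, ℓ i := by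
        rw [hℓ', Finset.sum_update_of_mem (Finset.mem_univ i₀), Finset.sdiff_singleton_eq_erase]
        rw [← Finset.add_sum_erase Finset.univ ℓ (Finset.mem_univ i₀), hi₀val]
        have h1 : 1 ≤ ℓ z := by omega
        omega
      omega
    obtain ⟨ℓ'', h1, h2, h3⟩ := ih ℓ' hsum' hanti' hknew_le
    refine ⟨ℓ'', fun i => ?_, h2, h3⟩
    calc ℓ'' i ≤ ℓ' i := h1 i
      _ ≤ ℓ i := by
        rw [hℓ']
        rcases eq_or_ne i i₀ with rfl | hi
        · rw [Function.update_self, hi₀val]; omega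
        · rw [Function.update_of_ne hi]


private lemma list_mul_le_sum {q : ℕ} : ∀ (l : List ℕ), (∀ x ∈ l, q ≤ x) →
    l.length * q ≤ l.sum := by
  intro l
  induction l with
  | nil => simp
  | cons a t ih =>
    intro h
    have := h a (by simp)
    have := ih (fun x hx => h x (by simp [hx]))
    simp only [List.length_cons, List.sum_cons]
    nlinarith
private lemma list_sum_le_mul {q : ℕ} : ∀ (l : List ℕ), (∀ x ∈ l, x ≤ q) →
    l.sum ≤ l.length * q := by
  intro l
  induction l with
  | nil => simp
  | cons a t ih =>
    intro h
    have := h a (by simp)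
    have := ih (fun x hx => h x (by simp [hx]))
    simp only [List.length_cons, List.sum_cons]
    nlinarith

/-- split a sorted Kraft-exact list into two halves of equal Kraft mass. -/
private lemma split_lemma (M : ℕ) (ℓ : List ℕ) (hs : ℓ.Pairwise (· ≤ ·))
    (h1 : ∀ k ∈ ℓ, 1 ≤ k) (hle : ∀ k ∈ ℓ, k ≤ M + 1)
    (hsum : (ℓ.map fun k => 2 ^ (M + 1 - k)).sum = 2 ^ (M + 1)) :
    ∃ A B : List ℕ, ℓ = A ++ B ∧
      (A.map fun k => 2 ^ (M + 1 - k)).sum = 2 ^ M ∧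
      (B.map fun k => 2 ^ (M + 1 - k)).sum = 2 ^ M ∧
      A ≠ [] ∧ B ≠ [] ∧ A.length ≤ B.length := by
  classical
  set w : ℕ → ℕ := fun k => 2 ^ (M + 1 - k) with hw
  have hP : ∃ j, 2 ^ M ≤ ((ℓ.take j).map w).sum :=
    ⟨ℓ.length, by rw [List.take_length, hsum]; exact Nat.pow_le_pow_right (by norm_num) (by omega)⟩
  set j := Nat.find hP with hj
  have hspec : 2 ^ M ≤ ((ℓ.take j).map w).sum := Nat.find_spec hP
  have hjle : j ≤ ℓ.length := Nat.find_min' hP (by rw [List.take_length, hsum]; exact Nat.pow_le_pow_right (by norm_num) (by omega))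
  have hjpos : 1 ≤ j := by
    by_contra hcon
    have h0 : j = 0 := by omega
    rw [h0] at hspec
    simp at hspec
  have hprev : ¬ 2 ^ M ≤ ((ℓ.take (j-1)).map w).sum := Nat.find_min hP (by omega)
  clear_value j
  clear hj
  -- the pivot element
  have hjlt : j - 1 < ℓ.length := by
    rcases eq_or_lt_of_le hjle with h | h
    · omega
    · omega
  set d := ℓ.get ⟨j - 1, hjlt⟩ with hd
  have hdmem : d ∈ ℓ := by rw [hd]; exact ℓ.get_mem _
  have htake : ℓ.take j = ℓ.take (j-1) ++ [d] := by
    have : j = (j - 1) + 1 := by omega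
    rw [this, List.take_succ]
    congr 1
    rw [List.getElem?_eq_getElem hjlt]
    simp [hd]
  -- every element of take j is ≤ d
  have hmemle : ∀ a ∈ ℓ.take j, a ≤ d := by
    have hsub : (ℓ.take j).Pairwise (· ≤ ·) := hs.sublist (List.take_sublist _ _)
    rw [htake] at hsub
    intro a ha
    rw [htake, List.mem_append] at ha
    rcases ha with ha | ha
    · exact (List.pairwise_append.1 hsub).2.2 a ha d (by simp)
    · simp at ha; omega
  have hstep : ((ℓ.take j).map w).sum = ((ℓ.take (j-1)).map w).sum + w d := by
    conv_lhs => rw [htake]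
    simp
  have hd1 : 1 ≤ d := h1 d hdmem
  set q := 2 ^ (M + 1 - d) with hq
  have hwd : w d = q := rfl
  have hdvd_sum : q ∣ ((ℓ.take j).map w).sum := by
    apply List.dvd_sum
    intro x hx
    rcases List.mem_map.1 hx with ⟨a, ha, rfl⟩
    have := hmemle a ha
    exact pow_dvd_pow 2 (by omega)
  have hdvd_pow : q ∣ 2 ^ M := pow_dvd_pow 2 (by omega)
  -- conclude sum of take j = 2^M
  have hsumA : ((ℓ.take j).map w).sum = 2 ^ M := by
    rw [hwd] at hstep
    obtain ⟨u, hu⟩ := hdvd_sum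
    obtain ⟨v, hv⟩ := hdvd_pow
    have hq0 : 0 < q := Nat.pow_pos (by norm_num)
    have hvu : v ≤ u := Nat.le_of_mul_le_mul_left (by rw [← hv, ← hu]; exact hspec) hq0
    have huv : u ≤ v := by
      by_contra hcon2
      apply hprev
      have hpe : ((ℓ.take (j-1)).map w).sum = ((ℓ.take j).map w).sum - q :=
        Nat.eq_sub_of_add_eq hstep.symm
      have hvu1 : v + 1 ≤ u := by omega
      have hmul : q * (v + 1) ≤ q * u := Nat.mul_le_mul_left q hvu1
      rw [hpe, hu, hv]
      apply Nat.le_sub_of_add_le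
      calc q * v + q = q * (v + 1) := by ring
        _ ≤ q * u := hmul
    have huv2 : u = v := le_antisymm huv hvu
    rw [hu, hv, huv2]
  refine ⟨ℓ.take j, ℓ.drop j, (List.take_append_drop j ℓ).symm, hsumA, ?_, ?_, ?_, ?_⟩
  · -- sum of drop
    have : ((ℓ.take j).map w).sum + ((ℓ.drop j).map w).sum = 2 ^ (M+1) := by
      rw [← List.sum_append, ← List.map_append, List.take_append_drop, hsum]
    have h2 : (2:ℕ) ^ (M+1) = 2 ^ M + 2 ^ M := by ring
    omega
  · intro h
    have hlt : (ℓ.take j).length = j := by rw [List.length_take]; omega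
    rw [h] at hlt
    simp at hlt
    omega
  · intro h
    have : ((ℓ.drop j).map w).sum = 0 := by rw [h]; simp
    have h2 : ((ℓ.take j).map w).sum + ((ℓ.drop j).map w).sum = 2 ^ (M+1) := by
      rw [← List.sum_append, ← List.map_append, List.take_append_drop, hsum]
    have h3 : (2:ℕ) ^ (M+1) = 2 ^ M + 2 ^ M := by ring
    have h4 : (0:ℕ) < 2 ^ M := Nat.pow_pos (by norm_num)
    omega
  · -- |A| ≤ |B|
    have hAlow : ∀ x ∈ (ℓ.take j).map w, q ≤ x := by
      intro x hx
      rcases List.mem_map.1 hx with ⟨a, ha, rfl⟩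
      have := hmemle a ha
      exact Nat.pow_le_pow_right (by norm_num) (by omega)
    have hBhigh : ∀ x ∈ (ℓ.drop j).map w, x ≤ q := by
      intro x hx
      rcases List.mem_map.1 hx with ⟨b, hb, rfl⟩
      have hdb : d ≤ b := by
        have hsplit : ℓ = ℓ.take j ++ ℓ.drop j := (List.take_append_drop j ℓ).symm
        have hpw : ∀ a ∈ ℓ.take j, ∀ c ∈ ℓ.drop j, a ≤ c := by
          have := hs
          rw [hsplit] at this
          exact fun a ha c hc => (List.pairwise_append.1 this).2.2 a ha c hc
        apply hpw d _ b hb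
        rw [htake]; simp
      exact Nat.pow_le_pow_right (by norm_num) (by omega)
    have h1' := list_mul_le_sum ((ℓ.take j).map w) hAlow
    have h2' := list_sum_le_mul ((ℓ.drop j).map w) hBhigh
    rw [hsumA] at h1'
    have h3 : ((ℓ.take j).map w).sum + ((ℓ.drop j).map w).sum = 2 ^ (M+1) := by
      rw [← List.sum_append, ← List.map_append, List.take_append_drop, hsum]
    have h4 : ((ℓ.drop j).map w).sum = 2 ^ M := by
      have : (2:ℕ) ^ (M+1) = 2 ^ M + 2 ^ M := by ring
      rw [hsumA] at h3
      omega
    rw [h4] at h2'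
    have hq0 : 0 < q := Nat.pow_pos (by norm_num)
    have hlA : ((ℓ.take j).map w).length = (ℓ.take j).length := by simp
    have hlB : ((ℓ.drop j).map w).length = (ℓ.drop j).length := by simp
    rw [hlA] at h1'
    rw [hlB] at h2'
    exact Nat.le_of_mul_le_mul_right (le_trans h1' h2') hq0


/-- main construction: from exact sorted Kraft lengths, build a prefix code with few ones. -/
private lemma build_code : ∀ (M : ℕ) (ℓ : List ℕ), ℓ.Pairwise (· ≤ ·) →
    (∀ k ∈ ℓ, k ≤ M) → (ℓ.map fun k => 2 ^ (M - k)).sum = 2 ^ M →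
    ∃ cw : List (List Bool), cw.map List.length = ℓ ∧ cw.Pairwise NPF ∧
      ∀ c ∈ cw, c.count true ≤ Nat.log 2 ℓ.length := by
  intro M
  induction M with
  | zero =>
    intro ℓ hs hle hsum
    have hz : ∀ k ∈ ℓ, k = 0 := fun k hk => Nat.le_zero.1 (hle k hk)
    have hlen : ℓ.length = 1 := by
      have : ℓ.map (fun k => 2 ^ (0 - k)) = ℓ.map (fun _ => 1) := by
        apply List.map_congr_left
        intro k hk
        rw [hz k hk]
        simp
      rw [this] at hsum
      simpa using hsum
    obtain ⟨a, ha⟩ := List.length_eq_one_iff.1 hlen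
    have ha0 : a = 0 := hz a (by rw [ha]; simp)
    refine ⟨[[]], by simp [ha, ha0], by simp, by simp⟩
  | succ M ih =>
    intro ℓ hs hle hsum
    by_cases h0 : ∃ k ∈ ℓ, k = 0
    · -- ℓ = [0]
      obtain ⟨k, hk, rfl⟩ := h0
      obtain ⟨s, t, rfl⟩ := List.append_of_mem hk
      have hsum' : ((s.map fun k => 2 ^ (M + 1 - k)).sum + (2 ^ (M + 1) +
          (t.map fun k => 2 ^ (M + 1 - k)).sum)) = 2 ^ (M + 1) := by
        simpa using hsum
      have hs0 : s = [] := by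
        cases s with
        | nil => rfl
        | cons x s' =>
          exfalso
          have h1 : (0:ℕ) < 2 ^ (M + 1 - x) := Nat.pow_pos (by norm_num)
          simp only [List.map_cons, List.sum_cons] at hsum'
          omega
      have ht0 : t = [] := by
        cases t with
        | nil => rfl
        | cons x t' =>
          exfalso
          have h1 : (0:ℕ) < 2 ^ (M + 1 - x) := Nat.pow_pos (by norm_num)
          simp only [List.map_cons, List.sum_cons] at hsum'
          omega
      subst hs0; subst ht0
      exact ⟨[[]], by simp, by simp, by simp⟩
    · have h1 : ∀ k ∈ ℓ, 1 ≤ k := by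
        intro k hk
        rcases Nat.eq_zero_or_pos k with rfl | h
        · exact absurd ⟨0, hk, rfl⟩ h0
        · exact h
      obtain ⟨A, B, hAB, hsA, hsB, hAne, hBne, hlenAB⟩ := split_lemma M ℓ hs h1 hle hsum
      have hsub : ∀ (X : List ℕ), X.Sublist ℓ →
          (X.map (· - 1)).Pairwise (· ≤ ·) ∧ (∀ k ∈ X.map (· - 1), k ≤ M) := by
        intro X hX
        constructor
        · exact List.Pairwise.map (· - 1) (fun a b hab => Nat.sub_le_sub_right hab 1)
            (hs.sublist hX)
        · intro k hk
          rcases List.mem_map.1 hk with ⟨x, hx, rfl⟩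
          have := hle x (hX.mem hx)
          omega
      have hAsub : A.Sublist ℓ := hAB ▸ (List.sublist_append_left A B)
      have hBsub : B.Sublist ℓ := hAB ▸ (List.sublist_append_right A B)
      have hsumA' : ((A.map (· - 1)).map fun k => 2 ^ (M - k)).sum = 2 ^ M := by
        rw [List.map_map, ← hsA]
        apply congrArg
        apply List.map_congr_left
        intro k hk
        have := h1 k (hAsub.mem hk)
        have := hle k (hAsub.mem hk)
        simp only [Function.comp]
        congr 1
        omega
      have hsumB' : ((B.map (· - 1)).map fun k => 2 ^ (M - k)).sum = 2 ^ M := by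
        rw [List.map_map, ← hsB]
        apply congrArg
        apply List.map_congr_left
        intro k hk
        have := h1 k (hBsub.mem hk)
        have := hle k (hBsub.mem hk)
        simp only [Function.comp]
        congr 1
        omega
      obtain ⟨cwA, hlA, hpA, hcA⟩ := ih (A.map (· - 1)) (hsub A hAsub).1 (hsub A hAsub).2 hsumA'
      obtain ⟨cwB, hlB, hpB, hcB⟩ := ih (B.map (· - 1)) (hsub B hBsub).1 (hsub B hBsub).2 hsumB'
      refine ⟨cwA.map (List.cons true) ++ cwB.map (List.cons false), ?_, ?_, ?_⟩
      · rw [List.map_append, List.map_map, List.map_map, hAB]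
        congr 1
        · have : (List.length ∘ List.cons true) = (fun c : List Bool => c.length + 1) := by
            funext c; simp
          rw [this]
          calc cwA.map (fun c => c.length + 1) = (cwA.map List.length).map (· + 1) := by
                rw [List.map_map]; rfl
            _ = (A.map (· - 1)).map (· + 1) := by rw [hlA]
            _ = A := by
                rw [List.map_map]
                calc A.map ((· + 1) ∘ (· - 1)) = A.map id := by
                      apply List.map_congr_left
                      intro k hk
                      have := h1 k (hAsub.mem hk)
                      simp only [Function.comp, id]
                      omega
                  _ = A := List.map_id A
        · have : (List.length ∘ List.cons false) = (fun c : List Bool => c.length + 1) := by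
            funext c; simp
          rw [this]
          calc cwB.map (fun c => c.length + 1) = (cwB.map List.length).map (· + 1) := by
                rw [List.map_map]; rfl
            _ = (B.map (· - 1)).map (· + 1) := by rw [hlB]
            _ = B := by
                rw [List.map_map]
                calc B.map ((· + 1) ∘ (· - 1)) = B.map id := by
                      apply List.map_congr_left
                      intro k hk
                      have := h1 k (hBsub.mem hk)
                      simp only [Function.comp, id]
                      omega
                  _ = B := List.map_id B
      · rw [List.pairwise_append]
        refine ⟨?_, ?_, ?_⟩
        · rw [List.pairwise_map]
          apply hpA.imp
          intro a b hab
          exact ⟨fun hpre => hab.1 (List.cons_prefix_cons.1 hpre).2,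
                 fun hpre => hab.2 (List.cons_prefix_cons.1 hpre).2⟩
        · rw [List.pairwise_map]
          apply hpB.imp
          intro a b hab
          exact ⟨fun hpre => hab.1 (List.cons_prefix_cons.1 hpre).2,
                 fun hpre => hab.2 (List.cons_prefix_cons.1 hpre).2⟩
        · intro x hx y hy
          rcases List.mem_map.1 hx with ⟨a, _, rfl⟩
          rcases List.mem_map.1 hy with ⟨b, _, rfl⟩
          exact ⟨fun hpre => by simpa using (List.cons_prefix_cons.1 hpre).1,
                 fun hpre => by simpa using (List.cons_prefix_cons.1 hpre).1⟩
      · intro c hc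
        have hA1 : 1 ≤ A.length := List.length_pos_iff.2 hAne
        have hlAA : cwA.length = A.length := by
          have := congrArg List.length hlA
          simpa using this
        have hlBB : cwB.length = B.length := by
          have := congrArg List.length hlB
          simpa using this
        have hℓlen : ℓ.length = A.length + B.length := by rw [hAB]; simp
        rcases List.mem_append.1 hc with hc | hc
        · rcases List.mem_map.1 hc with ⟨a, ha, rfl⟩
          have hca := hcA a ha
          have hstep : Nat.log 2 (A.length) + 1 = Nat.log 2 (A.length * 2) :=
            (Nat.log_mul_base (by norm_num) (by omega)).symm
          have hmono : Nat.log 2 (A.length * 2) ≤ Nat.log 2 ℓ.length := by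
            apply Nat.log_mono_right
            omega
          have hcnt : (true :: a).count true = a.count true + 1 := by simp
          rw [hcnt]
          have hlen' : (A.map (· - 1)).length = A.length := by simp
          rw [hlen'] at hca
          omega
        · rcases List.mem_map.1 hc with ⟨b, hb, rfl⟩
          have hcb := hcB b hb
          have hmono : Nat.log 2 (B.length) ≤ Nat.log 2 ℓ.length := by
            apply Nat.log_mono_right
            omega
          have hcnt : (false :: b).count true = b.count true := by simp
          rw [hcnt]
          have hlen' : (B.map (· - 1)).length = B.length := by simp
          rw [hlen'] at hcb
          omega


/-- Kraft inequality for prefix codes, function form. -/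
private lemma kraft_direct {n : ℕ} (v : Fin n → List Bool)
    (hv : ∀ i j, i ≠ j → ¬ (v i <+: v j)) : kraftF (fun i => (v i).length) ≤ 1 := by
  classical
  set m : Fin n → ℕ := fun i => (v i).length with hm
  set M := Finset.univ.sup m with hM
  have hle : ∀ i, m i ≤ M := fun i => Finset.le_sup (Finset.mem_univ i)
  have hpair : (List.ofFn v).Pairwise NPF := by
    apply List.pairwise_ofFn.2
    intro i j hij
    exact ⟨hv i j (Fin.ne_of_lt hij), hv j i (Fin.ne_of_gt hij)⟩
  have hlen : ∀ c ∈ List.ofFn v, c.length ≤ M := by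
    intro c hc
    rcases List.mem_ofFn.1 hc with ⟨i, rfl⟩
    exact hle i
  have hkl := kraft_list M (List.ofFn v) hpair hlen
  have hnat : (∑ i, 2 ^ (M - m i) : ℕ) ≤ 2 ^ M := by
    calc (∑ i, 2 ^ (M - m i) : ℕ)
        = ((List.ofFn v).map fun c => 2 ^ (M - c.length)).sum := by
          rw [List.map_ofFn, List.sum_ofFn]
          rfl
      _ ≤ 2 ^ M := hkl
  have hs := kraft_scaled m M hle
  have h2 : (0:ℝ) < 2 ^ M := by positivity
  have hr : (2:ℝ) ^ M * kraftF m ≤ 2 ^ M * 1 := by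
    rw [← hs, mul_one]
    exact_mod_cast hnat
  exact le_of_mul_le_mul_left hr h2

/-- antitone rearrangement of a tuple of naturals. -/
private lemma exists_antitone_rearrangement {n : ℕ} (p : Fin n → ℝ)
    (hmono : Monotone p) (m : Fin n → ℕ) :
    ∃ q : Fin n → ℕ, Antitone q ∧ kraftF q = kraftF m ∧
      ∑ i, p i * (q i : ℝ) ≤ ∑ i, p i * (m i : ℝ) := by
  classical
  set f : Fin n → ℤ := fun i => -(m i : ℤ) with hf
  set σ := Tuple.sort f with hσ
  have hsorted : Monotone (f ∘ σ) := Tuple.monotone_sort f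
  set q : Fin n → ℕ := m ∘ σ with hq
  have hanti : Antitone q := by
    intro i j hij
    have h1 := hsorted hij
    simp only [Function.comp, hf] at h1
    have : (m (σ j) : ℤ) ≤ (m (σ i) : ℤ) := by omega
    exact_mod_cast this
  refine ⟨q, hanti, ?_, ?_⟩
  · rw [kraftF, kraftF]
    exact Equiv.sum_comp σ (fun i => ((2:ℝ) ^ m i)⁻¹)
  · have hantivary : Antivary p (fun i => (q i : ℝ)) := by
      intro i j hij
      simp only at hij
      have hqij : q i < q j := by exact_mod_cast hij
      have hij2 : ¬ i ≤ j := by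
        intro hle
        have := hanti hle
        omega
      exact hmono (le_of_lt (lt_of_not_ge hij2))
    have hre := hantivary.sum_smul_le_sum_smul_comp_perm (σ := σ⁻¹)
    simp only [smul_eq_mul] at hre
    calc ∑ i, p i * (q i : ℝ) ≤ ∑ i, p i * (q (σ⁻¹ i) : ℝ) := hre
      _ = ∑ i, p i * (m i : ℝ) := by
        apply Finset.sum_congr rfl
        intro i _
        have : q (σ⁻¹ i) = m i := congrArg m (Equiv.apply_symm_apply σ i)
        rw [this]

/-- **Theorem 3.** Let `p_1 ≤ … ≤ p_n` be a nondecreasing probability distribution on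
`{1,…,n}`, with `n ≥ 1`. Then there exists a prefix code attaining the minimum average
length over ALL prefix codes, in which every codeword contains at most `log₂ n` ones. -/
theorem exists_optimal_prefix_code_log_ones
    (n : ℕ) (hn : 1 ≤ n) (p : Fin n → ℝ)
    (hp : ∀ i, 0 ≤ p i) (hsum : ∑ i, p i = 1) (hmono : Monotone p) :
    ∃ w : Fin n → List Bool,
      (∀ i j, i ≠ j → ¬ (w i <+: w j)) ∧
      (∀ v : Fin n → List Bool, (∀ i j, i ≠ j → ¬ (v i <+: v j)) →
        ∑ i, p i * ((w i).length : ℝ) ≤ ∑ i, p i * ((v i).length : ℝ)) ∧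
      (∀ i, ((w i).count true : ℝ) ≤ Real.logb 2 n) := by
  classical
  set 𝒜 : Set (Fin n → ℕ) := {ℓ | Antitone ℓ ∧ kraftF ℓ = 1} with h𝒜
  have hfin : 𝒜.Finite := by
    apply Set.Finite.subset (Set.Finite.pi (fun i : Fin n => Set.finite_Iic n))
    intro ℓ hℓ i _
    have := length_le_of_kraft_eq_one hn ℓ hℓ.2 i
    simp only [Set.mem_Iic]
    omega
  have hne : 𝒜.Nonempty := by
    have hconst : kraftF (fun _ : Fin n => n) ≤ 1 := by
      rw [kraftF]
      rw [Finset.sum_const, Finset.card_univ, Fintype.card_fin, nsmul_eq_mul, ← div_eq_mul_inv,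
        div_le_one (by positivity)]
      exact_mod_cast (Nat.lt_two_pow_self (n := n)).le
    obtain ⟨ℓ₀, _, h1, h2⟩ := kraft_completion hn (∑ _i : Fin n, n)
      (fun _ => n) le_rfl (fun _ _ _ => le_rfl) hconst
    exact ⟨ℓ₀, h1, h2⟩
  obtain ⟨ℓs, hℓs, hmin⟩ := Set.exists_min_image 𝒜 (fun ℓ => ∑ i, p i * (ℓ i : ℝ)) hfin hne
  obtain ⟨hanti, hkraft⟩ := hℓs
  have hbound : ∀ i, ℓs i ≤ n - 1 := length_le_of_kraft_eq_one hn ℓs hkraft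
  set lst := (List.ofFn ℓs).reverse with hlst
  have hlstlen : lst.length = n := by simp [hlst]
  have hsorted : lst.Pairwise (· ≤ ·) := by
    rw [hlst, List.pairwise_reverse]
    exact List.pairwise_ofFn.2 (fun i j hij => hanti hij.le)
  have hlstle : ∀ k ∈ lst, k ≤ n := by
    intro k hk
    rw [hlst, List.mem_reverse] at hk
    rcases List.mem_ofFn.1 hk with ⟨i, rfl⟩
    have := hbound i
    omega
  have hlstsum : (lst.map fun k => 2 ^ (n - k)).sum = 2 ^ n := by
    have h1 : (lst.map fun k => 2 ^ (n - k)).sum = ∑ i, 2 ^ (n - ℓs i) := by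
      rw [hlst, List.map_reverse, List.sum_reverse, List.map_ofFn, List.sum_ofFn]
      rfl
    rw [h1]
    have h2 := kraft_scaled ℓs n (fun i => by have := hbound i; omega)
    rw [hkraft, mul_one] at h2
    exact_mod_cast h2
  obtain ⟨cw, hcwlen, hcwpair, hcwones⟩ := build_code n lst hsorted hlstle hlstsum
  have hcwl : cw.length = n := by
    have := congrArg List.length hcwlen
    simpa [hlstlen] using this
  have hidx : ∀ i : Fin n, n - 1 - i.val < cw.length := by
    intro i
    rw [hcwl]
    omega
  set w : Fin n → List Bool := fun i => cw[n - 1 - i.val]'(hidx i) with hw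
  have hwlen : ∀ i, (w i).length = ℓs i := by
    intro i
    have hidx' : n - 1 - i.val < (cw.map List.length).length := by
      rw [List.length_map]
      exact hidx i
    have h1 : (w i).length = (cw.map List.length)[n - 1 - i.val]'hidx' := by
      rw [hw, List.getElem_map]
    rw [h1]
    have h2 := List.getElem_of_eq hcwlen hidx'
    rw [h2]
    simp only [hlst, List.getElem_reverse, List.getElem_ofFn, List.length_ofFn]
    congr 1
    apply Fin.ext
    simp only
    have := i.isLt
    omega
  refine ⟨w, ?_, ?_, ?_⟩
  · -- prefix-free
    intro i j hij
    have hne' : n - 1 - i.val ≠ n - 1 - j.val := by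
      have hi := i.isLt
      have hj := j.isLt
      have : i.val ≠ j.val := fun h => hij (Fin.ext h)
      omega
    have hpg := List.pairwise_iff_getElem.1 hcwpair
    rcases lt_or_gt_of_ne hne' with h | h
    · exact (hpg _ _ (hidx i) (hidx j) h).1
    · exact (hpg _ _ (hidx j) (hidx i) h).2
  · -- optimality
    intro v hv
    set m : Fin n → ℕ := fun i => (v i).length with hm
    have hkm : kraftF m ≤ 1 := kraft_direct v hv
    obtain ⟨q, hqanti, hqk, hqle⟩ := exists_antitone_rearrangement p hmono m
    have hqk1 : kraftF q ≤ 1 := by rw [hqk]; exact hkm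
    obtain ⟨ℓc, hc1, hc2, hc3⟩ := kraft_completion hn (∑ i, q i) q le_rfl hqanti hqk1
    have hcA : ℓc ∈ 𝒜 := ⟨hc2, hc3⟩
    have hstep1 : ∑ i, p i * (ℓs i : ℝ) ≤ ∑ i, p i * (ℓc i : ℝ) := hmin ℓc hcA
    have hstep2 : ∑ i, p i * (ℓc i : ℝ) ≤ ∑ i, p i * (q i : ℝ) := by
      apply Finset.sum_le_sum
      intro i _
      have : (ℓc i : ℝ) ≤ (q i : ℝ) := by exact_mod_cast hc1 i
      exact mul_le_mul_of_nonneg_left this (hp i)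
    have hL : ∑ i, p i * ((w i).length : ℝ) = ∑ i, p i * (ℓs i : ℝ) := by
      apply Finset.sum_congr rfl
      intro i _
      rw [hwlen i]
    rw [hL]
    calc ∑ i, p i * (ℓs i : ℝ) ≤ ∑ i, p i * (ℓc i : ℝ) := hstep1
      _ ≤ ∑ i, p i * (q i : ℝ) := hstep2
      _ ≤ ∑ i, p i * (m i : ℝ) := hqle
  · -- few ones
    intro i
    have hmem : w i ∈ cw := by
      rw [hw]
      exact List.getElem_mem _
    have hcnt := hcwones (w i) hmem
    rw [hlstlen] at hcnt
    have hlog : 2 ^ (Nat.log 2 n) ≤ n := Nat.pow_log_le_self 2 (by omega)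
    have h1 : ((2:ℝ) ^ (Nat.log 2 n)) ≤ (n:ℝ) := by exact_mod_cast hlog
    have h2 : Real.logb 2 ((2:ℝ) ^ (Nat.log 2 n)) ≤ Real.logb 2 n :=
      Real.logb_le_logb_of_le (by norm_num) (by positivity) h1
    rw [Real.logb_pow, Real.logb_self_eq_one (b := 2) (by norm_num), mul_one] at h2
    calc ((w i).count true : ℝ) ≤ (Nat.log 2 n : ℝ) := by exact_mod_cast hcnt
      _ ≤ Real.logb 2 n := h2
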